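/- Let G be a finite simple graph with n vertices whose degree sequence listed in nondecreasing order is d_1 ≤ d_2 ≤ ... ≤ d_n. If k is the smallest integer for which ∑_{i=0}^{k−1} d_{n−i} ≥ 2(n−k) + ∑_{i=1}^{n−k} d_i, then the signed domination number of G satisfies γ_s(G) ≥ 2k − n. -/

import Mathlib

/-- `f : V → ℤ` is a signed domination function of `G`: it takes values in `{-1, +1}`
and sums to at least `1` over every closed neighbourhood. -/
def SimpleGraph.IsSignedDominationFunction {V : Type*} [Fintype V] [DecidableEq V]
    (G : SimpleGraph V) [DecidableRel G.Adj] (f : V → ℤ) : Prop :=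
  (∀ v, f v = 1 ∨ f v = -1) ∧
  ∀ v : V, 1 ≤ ∑ u ∈ insert v (G.neighborFinset v), f u

/-- The signed domination number `γ_s(G)`. -/
noncomputable def SimpleGraph.signedDominationNumber {V : Type*} [Fintype V] [DecidableEq V]
    (G : SimpleGraph V) [DecidableRel G.Adj] : ℤ :=
  sInf {s : ℤ | ∃ f : V → ℤ, G.IsSignedDominationFunction f ∧ s = ∑ v, f v}

open Finset

/-- A strictly monotone map between `Fin` types grows at least as fast as the identity. -/
lemma fin_strictMono_le_aux {m n : ℕ} {g : Fin m → Fin n} (hg : StrictMono g) :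
    ∀ jv : ℕ, ∀ j : Fin m, (j : ℕ) = jv → jv ≤ (g j : ℕ) := by
  intro jv
  induction jv with
  | zero => intro j _; exact Nat.zero_le _
  | succ iv ih =>
    intro j hj
    have hi : iv < m := by omega
    have h1 : iv ≤ (g ⟨iv, hi⟩ : ℕ) := ih ⟨iv, hi⟩ rfl
    have h2 : g ⟨iv, hi⟩ < g j := hg (by simp [Fin.lt_def, hj])
    have := Fin.lt_def.mp h2
    omega

lemma fin_strictMono_le {m n : ℕ} {g : Fin m → Fin n} (hg : StrictMono g) (j : Fin m) :
    (j : ℕ) ≤ (g j : ℕ) :=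
  fin_strictMono_le_aux hg _ j rfl

lemma fin_strictMono_ge {m n : ℕ} {g : Fin m → Fin n} (hg : StrictMono g) (j : Fin m) :
    (g j : ℕ) ≤ n - m + (j : ℕ) := by
  have hgr : StrictMono (fun j : Fin m => (g j.rev).rev) := by
    intro a b hab
    have hrev : b.rev < a.rev := by
      simp only [Fin.lt_def, Fin.val_rev]
      have := Fin.lt_def.mp hab
      omega
    have := Fin.lt_def.mp (hg hrev)
    simp only [Fin.lt_def, Fin.val_rev]
    omega
  have h := fin_strictMono_le hgr j.rev
  rw [Fin.rev_rev] at h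
  simp only [Fin.val_rev] at h
  have hj := j.isLt
  have hgj := (g j).isLt
  omega

/-- The sum of the `m = S.card` smallest values of a monotone function bounds the sum over `S`. -/
lemma bottom_sum_le {n : ℕ} (d : Fin n → ℕ) (hd : Monotone d) (S : Finset (Fin n)) :
    ∑ i ∈ univ.filter (fun i : Fin n => (i : ℕ) < S.card), d i ≤ ∑ i ∈ S, d i := by
  set m := S.card with hm
  have hmn : m ≤ n := by
    have := S.card_le_univ
    simpa using this
  set emb := S.orderEmbOfFin hm.symm with hemb
  have hS : S = univ.map ⟨fun j => emb j, emb.injective⟩ := by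
    symm
    apply Finset.eq_of_subset_of_card_le
    · intro x hx
      rcases Finset.mem_map.mp hx with ⟨j, _, rfl⟩
      exact S.orderEmbOfFin_mem hm.symm j
    · simp [hm]
  have hL : univ.filter (fun i : Fin n => (i : ℕ) < m) =
      univ.map ⟨Fin.castLE hmn, Fin.castLE_injective hmn⟩ := by
    ext i
    simp only [Finset.mem_filter, Finset.mem_univ, true_and, Finset.mem_map,
      Function.Embedding.coeFn_mk]
    constructor
    · intro h; exact ⟨⟨(i : ℕ), h⟩, Fin.ext rfl⟩
    · rintro ⟨j, _, rfl⟩; exact j.isLt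
  rw [hS, hL, Finset.sum_map, Finset.sum_map]
  apply Finset.sum_le_sum
  intro j _
  apply hd
  rw [Fin.le_def]
  simpa using fin_strictMono_le emb.strictMono j

/-- The sum over `S` is bounded by the sum of the `S.card` largest values of a monotone
function. -/
lemma sum_le_top_sum {n : ℕ} (d : Fin n → ℕ) (hd : Monotone d) (S : Finset (Fin n)) :
    ∑ i ∈ S, d i ≤ ∑ i ∈ univ.filter (fun i : Fin n => n - S.card ≤ (i : ℕ)), d i := by
  set m := S.card with hm
  have hmn : m ≤ n := by
    have := S.card_le_univ
    simpa using this
  set emb := S.orderEmbOfFin hm.symm with hemb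
  have hS : S = univ.map ⟨fun j => emb j, emb.injective⟩ := by
    symm
    apply Finset.eq_of_subset_of_card_le
    · intro x hx
      rcases Finset.mem_map.mp hx with ⟨j, _, rfl⟩
      exact S.orderEmbOfFin_mem hm.symm j
    · simp [hm]
  have htopinj : Function.Injective (fun j : Fin m => (⟨n - m + (j : ℕ), by omega⟩ : Fin n)) := by
    intro a b hab
    have := Fin.val_eq_of_eq hab
    simp only at this
    ext
    omega
  have hT : univ.filter (fun i : Fin n => n - m ≤ (i : ℕ)) =
      univ.map ⟨fun j : Fin m => (⟨n - m + (j : ℕ), by omega⟩ : Fin n), htopinj⟩ := by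
    ext i
    simp only [Finset.mem_filter, Finset.mem_univ, true_and, Finset.mem_map,
      Function.Embedding.coeFn_mk]
    constructor
    · intro h
      have hi := i.isLt
      exact ⟨⟨(i : ℕ) - (n - m), by omega⟩, Fin.ext (by simp only [Fin.val_mk]; omega)⟩
    · rintro ⟨j, _, rfl⟩; simp
  rw [hS, hT, Finset.sum_map, Finset.sum_map]
  apply Finset.sum_le_sum
  intro j _
  apply hd
  rw [Fin.le_def]
  simpa using fin_strictMono_ge emb.strictMono j

open Finset in
theorem signed_domination_lower_bound_dunbar
    {V : Type*} [Fintype V] [DecidableEq V] (G : SimpleGraph V) [DecidableRel G.Adj]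
    (n : ℕ) (hn : n = Fintype.card V)
    (σ : V ≃ Fin n) (d : Fin n → ℕ) (hmono : Monotone d)
    (hdeg : ∀ v : V, d (σ v) = G.degree v)
    (k : ℕ) (hk : k ≤ n)
    (hcond : 2 * (n - k) + ∑ i ∈ univ.filter (fun i : Fin n => (i : ℕ) < n - k), d i ≤
             ∑ i ∈ univ.filter (fun i : Fin n => n - k ≤ (i : ℕ)), d i)
    (hsmallest : ∀ j : ℕ, j ≤ n →
      (2 * (n - j) + ∑ i ∈ univ.filter (fun i : Fin n => (i : ℕ) < n - j), d i ≤
        ∑ i ∈ univ.filter (fun i : Fin n => n - j ≤ (i : ℕ)), d i) → k ≤ j) :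
    2 * (k : ℤ) - (n : ℤ) ≤ G.signedDominationNumber := by
  -- Main claim: every SDF has sum at least 2k - n.
  have main : ∀ f : V → ℤ, G.IsSignedDominationFunction f → 2 * (k : ℤ) - n ≤ ∑ v, f v := by
    intro f ⟨h1, h2⟩
    classical
    set P : Finset V := univ.filter (fun v => f v = 1) with hP
    set M : Finset V := univ.filter (fun v => f v = -1) with hM
    have hMP : M = univ.filter (fun v => ¬ f v = 1) := by
      apply Finset.filter_congr
      intro v _
      rcases h1 v with h | h <;> simp [h]
    have hcardPM : P.card + M.card = n := by
      rw [hMP, hP, Finset.card_filter_add_card_filter_not]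
      simp [hn]
    set p := P.card with hp
    set m := M.card with hm'
    -- counts of positive/negative neighbours
    set a : V → ℕ := fun v => ((G.neighborFinset v).filter (fun u => f u = 1)).card with ha
    set b : V → ℕ := fun v => ((G.neighborFinset v).filter (fun u => f u = -1)).card with hb
    have hab : ∀ v, a v + b v = G.degree v := by
      intro v
      have hflip : (G.neighborFinset v).filter (fun u => f u = -1) =
          (G.neighborFinset v).filter (fun u => ¬ f u = 1) := by
        apply Finset.filter_congr
        intro u _
        rcases h1 u with h | h <;> simp [h]
      show ((G.neighborFinset v).filter (fun u => f u = 1)).card +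
          ((G.neighborFinset v).filter (fun u => f u = -1)).card = G.degree v
      rw [hflip, Finset.card_filter_add_card_filter_not]
      rfl
    have hnbrsum : ∀ v, ∑ u ∈ G.neighborFinset v, f u = (a v : ℤ) - b v := by
      intro v
      rw [← Finset.sum_filter_add_sum_filter_not (G.neighborFinset v) (fun u => f u = 1)]
      have e1 : ∑ u ∈ (G.neighborFinset v).filter (fun u => f u = 1), f u = (a v : ℤ) := by
        rw [Finset.sum_congr rfl (fun u hu => (Finset.mem_filter.mp hu).2)]
        simp [ha]
      have e2 : ∑ u ∈ (G.neighborFinset v).filter (fun u => ¬ f u = 1), f u = -(b v : ℤ) := by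
        have : (G.neighborFinset v).filter (fun u => ¬ f u = 1) =
            (G.neighborFinset v).filter (fun u => f u = -1) := by
          apply Finset.filter_congr
          intro u _
          rcases h1 u with h | h <;> simp [h]
        rw [this, Finset.sum_congr rfl (fun u hu => (Finset.mem_filter.mp hu).2)]
        simp [hb]
      rw [e1, e2]
      ring
    have hclosed : ∀ v, 1 ≤ f v + ((a v : ℤ) - b v) := by
      intro v
      have := h2 v
      rwa [Finset.sum_insert (SimpleGraph.notMem_neighborFinset_self G v), hnbrsum] at this
    -- key local inequalities
    have hMineq : ∀ v ∈ M, b v + 2 ≤ a v := by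
      intro v hv
      have hfv : f v = -1 := (Finset.mem_filter.mp hv).2
      have := hclosed v
      rw [hfv] at this
      omega
    have hPineq : ∀ v ∈ P, b v ≤ a v := by
      intro v hv
      have hfv : f v = 1 := (Finset.mem_filter.mp hv).2
      have := hclosed v
      rw [hfv] at this
      omega
    -- double counting of edges between M and P
    have hdc : ∑ v ∈ M, a v = ∑ u ∈ P, b u := by
      have haP : ∀ v, a v = ∑ u ∈ P, (if G.Adj v u then 1 else 0) := by
        intro v
        show ((G.neighborFinset v).filter (fun u => f u = 1)).card = _
        have : (G.neighborFinset v).filter (fun u => f u = 1) = P.filter (fun u => G.Adj v u) := by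
          ext u
          simp [hP, SimpleGraph.mem_neighborFinset, and_comm]
        rw [this, Finset.card_filter]
      have hbM : ∀ u, b u = ∑ v ∈ M, (if G.Adj v u then 1 else 0) := by
        intro u
        show ((G.neighborFinset u).filter (fun w => f w = -1)).card = _
        have : (G.neighborFinset u).filter (fun w => f w = -1) =
            M.filter (fun v => G.Adj v u) := by
          ext w
          simp [hM, SimpleGraph.mem_neighborFinset, and_comm, G.adj_comm]
        rw [this, Finset.card_filter]
      calc ∑ v ∈ M, a v = ∑ v ∈ M, ∑ u ∈ P, (if G.Adj v u then 1 else 0) := by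
            exact Finset.sum_congr rfl fun v _ => haP v
        _ = ∑ u ∈ P, ∑ v ∈ M, (if G.Adj v u then 1 else 0) := Finset.sum_comm
        _ = ∑ u ∈ P, b u := Finset.sum_congr rfl fun u _ => (hbM u).symm
    -- middle inequality: 2m + ∑_M deg ≤ ∑_P deg
    have hmiddle : 2 * m + ∑ v ∈ M, G.degree v ≤ ∑ v ∈ P, G.degree v := by
      have h1' : 2 * m + ∑ v ∈ M, G.degree v ≤ 2 * ∑ v ∈ M, a v := by
        have : 2 * m + ∑ v ∈ M, G.degree v = ∑ v ∈ M, (2 + G.degree v) := by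
          rw [Finset.sum_add_distrib, Finset.sum_const, smul_eq_mul]
          omega
        rw [this, Finset.mul_sum]
        apply Finset.sum_le_sum
        intro v hv
        have := hMineq v hv
        have := hab v
        omega
      have h2' : 2 * ∑ u ∈ P, b u ≤ ∑ v ∈ P, G.degree v := by
        rw [Finset.mul_sum]
        apply Finset.sum_le_sum
        intro u hu
        have := hPineq u hu
        have := hab u
        omega
      rw [hdc] at h1'
      omega
    -- transfer degree sums to sorted sequence
    have himgM : (M.image σ).card = m := Finset.card_image_of_injective M σ.injective
    have himgP : (P.image σ).card = p := Finset.card_image_of_injective P σ.injective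
    have hsumM : ∑ i ∈ M.image σ, d i = ∑ v ∈ M, G.degree v := by
      rw [Finset.sum_image (fun x _ y _ h => σ.injective h)]
      exact Finset.sum_congr rfl fun v _ => hdeg v
    have hsumP : ∑ i ∈ P.image σ, d i = ∑ v ∈ P, G.degree v := by
      rw [Finset.sum_image (fun x _ y _ h => σ.injective h)]
      exact Finset.sum_congr rfl fun v _ => hdeg v
    have hbot := bottom_sum_le d hmono (M.image σ)
    have htop := sum_le_top_sum d hmono (P.image σ)
    rw [himgM] at hbot
    rw [himgP] at htop
    rw [hsumM] at hbot
    rw [hsumP] at htop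
    -- the condition holds for j = p
    have hnp : n - p = m := by omega
    have hpn : p ≤ n := by omega
    have hcondp : 2 * (n - p) + ∑ i ∈ univ.filter (fun i : Fin n => (i : ℕ) < n - p), d i ≤
        ∑ i ∈ univ.filter (fun i : Fin n => n - p ≤ (i : ℕ)), d i := by
      rw [hnp]
      calc 2 * m + ∑ i ∈ univ.filter (fun i : Fin n => (i : ℕ) < m), d i
          ≤ 2 * m + ∑ v ∈ M, G.degree v := by omega
        _ ≤ ∑ v ∈ P, G.degree v := hmiddle
        _ ≤ ∑ i ∈ univ.filter (fun i : Fin n => m ≤ (i : ℕ)), d i := by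
            rw [← hnp]; exact htop
    have hkp : k ≤ p := hsmallest p hpn hcondp
    -- compute the sum of f
    have hsumf : ∑ v, f v = (p : ℤ) - m := by
      rw [← Finset.sum_filter_add_sum_filter_not univ (fun v => f v = 1)]
      have e1 : ∑ v ∈ univ.filter (fun v => f v = 1), f v = (p : ℤ) := by
        rw [Finset.sum_congr rfl (fun v hv => (Finset.mem_filter.mp hv).2)]
        simp [hp, hP]
      have e2 : ∑ v ∈ univ.filter (fun v => ¬ f v = 1), f v = -(m : ℤ) := by
        rw [← hMP, Finset.sum_congr rfl (fun v hv => (Finset.mem_filter.mp hv).2)]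
        simp [hm', hM]
      rw [e1, e2]
      ring
    rw [hsumf]
    have : (k : ℤ) ≤ p := by exact_mod_cast hkp
    have : (p : ℤ) + m = n := by exact_mod_cast hcardPM
    omega
  -- conclude via the infimum
  unfold SimpleGraph.signedDominationNumber
  apply le_csInf
  · refine ⟨∑ v : V, (1 : ℤ), fun _ => 1, ⟨fun v => Or.inl rfl, fun v => ?_⟩, rfl⟩
    rw [Finset.sum_const, nsmul_eq_mul, mul_one]
    have : v ∈ insert v (G.neighborFinset v) := Finset.mem_insert_self _ _
    have := Finset.card_pos.mpr ⟨v, this⟩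
    exact_mod_cast this
  · rintro s ⟨f, hf, rfl⟩
    exact main f hf
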